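/- (Recurrence for connected labelled graphs) Let C_k denote the number of connected labelled simple graphs on k vertices. Then for every p ≥ 1, C_p = 2^{binom(p,2)} − (1/p) · Σ_{k=1}^{p−1} k · binom(p,k) · 2^{binom(p−k,2)} · C_k; equivalently, in division-free form, p · 2^{binom(p,2)} = Σ_{k=1}^{p} k · binom(p,k) · 2^{binom(p−k,2)} · C_k. -/

import Mathlib

open scoped Classical in
/-- `connectedLabelledGraphCount k` is the number of connected labelled simple graphs
on `k` vertices. -/
noncomputable def connectedLabelledGraphCount (k : ℕ) : ℕ :=
  Fintype.card {G : SimpleGraph (Fin k) // G.Connected}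

open Finset SimpleGraph

open scoped Classical in
noncomputable def auxCC (V : Type*) [Fintype V] : ℕ :=
  Fintype.card {G : SimpleGraph V // G.Connected}

lemma auxCC_congr {V W : Type*} [Fintype V] [Fintype W] (e : V ≃ W) :
    auxCC V = auxCC W := by
  classical
  apply Fintype.card_congr
  refine Equiv.subtypeEquiv e.simpleGraph fun G => ?_
  have i : G ≃g e.simpleGraph G := ⟨e, by simp⟩
  exact i.connected_iff

lemma auxCC_eq (V : Type*) [Fintype V] :
    auxCC V = connectedLabelledGraphCount (Fintype.card V) := by
  classical
  rw [auxCC_congr (Fintype.equivFin V)]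
  unfold auxCC connectedLabelledGraphCount
  exact congrArg (@Fintype.card _) (Subsingleton.elim _ _)

section Glue
variable {V : Type*} [Fintype V] [DecidableEq V]

def glue (S : Finset V) (H : SimpleGraph (↑S : Set V)) (K : SimpleGraph (↑(Sᶜ) : Set V)) : SimpleGraph V where
  Adj a b := (∃ (ha : a ∈ S) (hb : b ∈ S), H.Adj ⟨a, ha⟩ ⟨b, hb⟩) ∨
    (∃ (ha : a ∈ Sᶜ) (hb : b ∈ Sᶜ), K.Adj ⟨a, ha⟩ ⟨b, hb⟩)
  symm := by
    constructor
    rintro a b (⟨ha, hb, h⟩ | ⟨ha, hb, h⟩)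
    · exact Or.inl ⟨hb, ha, h.symm⟩
    · exact Or.inr ⟨hb, ha, h.symm⟩
  loopless := by
    constructor
    rintro a (⟨ha, hb, h⟩ | ⟨ha, hb, h⟩) <;> exact h.ne rfl

lemma glue_adj_iff_mem {S : Finset V} {H : SimpleGraph (↑S : Set V)} {K : SimpleGraph (↑(Sᶜ) : Set V)}
    {a b : V} (h : (glue S H K).Adj a b) : a ∈ S ↔ b ∈ S := by
  rcases h with ⟨ha, hb, -⟩ | ⟨ha, hb, -⟩
  · exact iff_of_true ha hb
  · exact iff_of_false (Finset.mem_compl.mp ha) (Finset.mem_compl.mp hb)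

lemma induce_glue_left (S : Finset V) (H : SimpleGraph (↑S : Set V)) (K : SimpleGraph (↑(Sᶜ) : Set V)) :
    (glue S H K).induce ↑S = H := by
  ext ⟨a, ha⟩ ⟨b, hb⟩
  simp only [comap_adj, Function.Embedding.coe_subtype]
  constructor
  · rintro (⟨ha', hb', h⟩ | ⟨ha', hb', h⟩)
    · exact h
    · exact absurd ha (Finset.mem_compl.mp ha')
  · intro h; exact Or.inl ⟨ha, hb, h⟩

lemma induce_glue_right (S : Finset V) (H : SimpleGraph (↑S : Set V)) (K : SimpleGraph (↑(Sᶜ) : Set V)) :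
    (glue S H K).induce ↑(Sᶜ) = K := by
  ext ⟨a, ha⟩ ⟨b, hb⟩
  simp only [comap_adj, Function.Embedding.coe_subtype]
  constructor
  · rintro (⟨ha', hb', h⟩ | ⟨ha', hb', h⟩)
    · exact absurd ha' (Finset.mem_compl.mp ha)
    · exact h
  · intro h; exact Or.inr ⟨ha, hb, h⟩

lemma glue_induce_eq (G : SimpleGraph V) (S : Finset V)
    (h : ∀ a b, G.Adj a b → (a ∈ S ↔ b ∈ S)) :
    glue S (G.induce ↑S) (G.induce ↑(Sᶜ)) = G := by
  ext a b
  constructor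
  · rintro (⟨ha, hb, hadj⟩ | ⟨ha, hb, hadj⟩) <;> exact hadj
  · intro hadj
    by_cases ha : a ∈ S
    · exact Or.inl ⟨ha, (h a b hadj).1 ha, hadj⟩
    · exact Or.inr ⟨Finset.mem_compl.mpr ha,
        Finset.mem_compl.mpr (fun hb => ha ((h a b hadj).2 hb)), hadj⟩

end Glue

lemma card_simpleGraph (V : Type*) [Fintype V] [Fintype (SimpleGraph V)] :
    Fintype.card (SimpleGraph V) = 2 ^ (Fintype.card V).choose 2 := by
  classical
  have e : SimpleGraph V ≃ Set {e : Sym2 V // ¬ e.IsDiag} := {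
    toFun := fun G => {x | x.1 ∈ G.edgeSet}
    invFun := fun f => SimpleGraph.fromEdgeSet {x | ∃ h : ¬ x.IsDiag, ⟨x, h⟩ ∈ f}
    left_inv := fun G => by
      have h : {x | ∃ h : ¬ x.IsDiag, x ∈ G.edgeSet} = G.edgeSet := by
        ext x
        exact ⟨fun ⟨_, h⟩ => h, fun h => ⟨G.not_isDiag_of_mem_edgeSet h, h⟩⟩
      show SimpleGraph.fromEdgeSet _ = G
      rw [show {x | ∃ h : ¬ x.IsDiag, ⟨x, h⟩ ∈ {x : {e : Sym2 V // ¬ e.IsDiag} | x.1 ∈ G.edgeSet}}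
          = G.edgeSet from h, fromEdgeSet_edgeSet]
    right_inv := fun f => by
      ext x
      simp only [Set.mem_setOf_eq, edgeSet_fromEdgeSet, Set.mem_diff]
      constructor
      · rintro ⟨⟨h, hx⟩, -⟩; exact hx
      · intro hx; exact ⟨⟨x.2, hx⟩, x.2⟩ }
  rw [Fintype.card_congr e, Fintype.card_set, Sym2.card_subtype_not_diag]

section Supp
variable {V : Type*} [Fintype V] [DecidableEq V]

lemma supp_glue (S : Finset V) (v : V) (hv : v ∈ S)
    (H : SimpleGraph (↑S : Set V)) (K : SimpleGraph (↑(Sᶜ) : Set V)) (hH : H.Connected) :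
    ((glue S H K).connectedComponentMk v).supp = ↑S := by
  have key : ∀ {x y : V} (p : (glue S H K).Walk x y), x ∈ S → y ∈ S := by
    intro x y p hx
    induction p with
    | nil => exact hx
    | cons h p ih => exact ih ((glue_adj_iff_mem h).1 hx)
  ext x
  simp only [ConnectedComponent.mem_supp_iff, ConnectedComponent.eq, Finset.mem_coe]
  constructor
  · rintro ⟨p⟩
    exact key p.reverse hv
  · intro hx
    have hr : H.Reachable ⟨x, hx⟩ ⟨v, hv⟩ := hH.preconnected _ _
    exact hr.map ⟨Subtype.val, fun {a b} h => Or.inl ⟨a.2, b.2, h⟩⟩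

omit [Fintype V] [DecidableEq V] in
lemma induce_supp_connected (G : SimpleGraph V) (v : V) :
    (G.induce ((G.connectedComponentMk v).supp)).Connected := by
  classical
  apply SimpleGraph.induce_connected_of_patches v (ConnectedComponent.connectedComponentMk_mem)
  intro x hx
  have hr : G.Reachable v x :=
    (ConnectedComponent.eq.mp hx).symm
  obtain ⟨p⟩ := hr
  refine ⟨{y | y ∈ p.support}, ?_, p.start_mem_support, p.end_mem_support, ?_⟩
  · intro y hy
    exact ConnectedComponent.eq.mpr (Reachable.symm ⟨p.takeUntil y hy⟩)
  · exact (p.connected_induce_support).preconnected _ _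

omit [Fintype V] [DecidableEq V] in
lemma induce_supp_connected' (G : SimpleGraph V) (v : V) (s : Set V)
    (h : (G.connectedComponentMk v).supp = s) : (G.induce s).Connected := by
  subst h; exact induce_supp_connected G v

end Supp

section Fiber
variable {V : Type*} [Fintype V] [DecidableEq V]

open scoped Classical in
noncomputable def fiberEquiv (S : Finset V) (v : V) (hv : v ∈ S) :
    {G : SimpleGraph V // (G.connectedComponentMk v).supp = ↑S} ≃
      {H : SimpleGraph (↑S : Set V) // H.Connected} × SimpleGraph (↑(Sᶜ) : Set V) where
  toFun G := (⟨G.1.induce ↑S, induce_supp_connected' G.1 v _ G.2⟩, G.1.induce ↑(Sᶜ))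
  invFun HK := ⟨glue S HK.1.1 HK.2, supp_glue S v hv _ _ HK.1.2⟩
  left_inv := fun x => Subtype.ext (glue_induce_eq x.1 S (fun a b hab => by
    have h2 : (a ∈ (↑S : Set V)) ↔ b ∈ (↑S : Set V) := by
      rw [← x.2]
      simp only [ConnectedComponent.mem_supp_iff, ConnectedComponent.connectedComponentMk_eq_of_adj hab]
    simpa using h2))
  right_inv := fun x => by
    refine Prod.ext ?_ ?_
    · exact Subtype.ext (induce_glue_left S x.1.1 x.2)
    · exact induce_glue_right S x.1.1 x.2

open scoped Classical in
lemma fiber_card (S : Finset V) (v : V) (hv : v ∈ S) :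
    Fintype.card {G : SimpleGraph V // (G.connectedComponentMk v).supp = ↑S} =
      connectedLabelledGraphCount S.card * 2 ^ (Fintype.card V - S.card).choose 2 := by
  rw [Fintype.card_congr (fiberEquiv S v hv), Fintype.card_prod]
  congr 1
  · rw [show Fintype.card {H : SimpleGraph (↑S : Set V) // H.Connected} = auxCC (↑S : Set V) from
      congrArg (@Fintype.card _) (Subsingleton.elim _ _), auxCC_eq]
    congr 1
    simp
  · rw [card_simpleGraph]
    congr 2
    simp [← Finset.card_compl (s := S)]
    congr 1
    ext x
    simp

end Fiber

open scoped Classical in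
lemma per_vertex {V : Type*} [Fintype V] [DecidableEq V] (v : V) :
    2 ^ (Fintype.card V).choose 2 =
      ∑ S ∈ Finset.univ.filter (fun S : Finset V => v ∈ S),
        connectedLabelledGraphCount S.card * 2 ^ (Fintype.card V - S.card).choose 2 := by
  have h0 : Fintype.card (SimpleGraph V) = ∑ S : Finset V,
      Fintype.card {G : SimpleGraph V // (G.connectedComponentMk v).supp = ↑S} := by
    rw [← Fintype.card_sigma]
    refine Fintype.card_congr ((Equiv.sigmaFiberEquiv
      (fun G : SimpleGraph V => (G.connectedComponentMk v).supp.toFinset)).symm.trans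
      (Equiv.sigmaCongrRight fun S => Equiv.subtypeEquivRight fun G => ?_))
    constructor
    · intro h; rw [← h, Set.coe_toFinset]
    · intro h; exact Finset.coe_injective (by rw [Set.coe_toFinset, h])
  rw [card_simpleGraph] at h0
  rw [h0]
  rw [← Finset.sum_subset (Finset.filter_subset (fun S : Finset V => v ∈ S) Finset.univ)
    (fun S _ hS => ?_)]
  · refine Finset.sum_congr rfl fun S hS => ?_
    exact fiber_card S v (Finset.mem_filter.mp hS).2
  · simp only [Finset.mem_filter, Finset.mem_univ, true_and] at hS
    rw [Fintype.card_eq_zero_iff]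
    refine ⟨fun G => hS ?_⟩
    have hv : v ∈ (G.1.connectedComponentMk v).supp := rfl
    rw [G.2] at hv
    exact hv

theorem recurrence_connected_labelled_graphs (p : ℕ) (hp : 1 ≤ p) :
    p * 2 ^ p.choose 2 =
      ∑ k ∈ Finset.Icc 1 p,
        k * p.choose k * 2 ^ (p - k).choose 2 * connectedLabelledGraphCount k := by
  classical
  have hcard : Fintype.card (Fin p) = p := Fintype.card_fin p
  have step1 : p * 2 ^ p.choose 2
      = ∑ _v : Fin p, 2 ^ p.choose 2 := by
    rw [Finset.sum_const, Finset.card_univ, hcard, smul_eq_mul]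
  have step2 : (∑ _v : Fin p, 2 ^ p.choose 2)
      = ∑ v : Fin p, ∑ S ∈ Finset.univ.filter (fun S : Finset (Fin p) => v ∈ S),
          connectedLabelledGraphCount S.card * 2 ^ (p - S.card).choose 2 := by
    refine Finset.sum_congr rfl fun v _ => ?_
    simpa [hcard] using per_vertex v
  have step3 : (∑ v : Fin p, ∑ S ∈ Finset.univ.filter (fun S : Finset (Fin p) => v ∈ S),
          connectedLabelledGraphCount S.card * 2 ^ (p - S.card).choose 2)
      = ∑ S : Finset (Fin p),
          S.card * (connectedLabelledGraphCount S.card * 2 ^ (p - S.card).choose 2) := by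
    simp_rw [Finset.sum_filter]
    rw [Finset.sum_comm]
    refine Finset.sum_congr rfl fun S _ => ?_
    rw [← Finset.sum_filter, Finset.filter_univ_mem, Finset.sum_const, smul_eq_mul]
  have step4 : (∑ S : Finset (Fin p),
          S.card * (connectedLabelledGraphCount S.card * 2 ^ (p - S.card).choose 2))
      = ∑ k ∈ Finset.range (p + 1),
          p.choose k * (k * (connectedLabelledGraphCount k * 2 ^ (p - k).choose 2)) := by
    rw [← Finset.powerset_univ, Finset.sum_powerset, Finset.card_univ, hcard]
    refine Finset.sum_congr rfl fun k hk => ?_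
    rw [Finset.sum_powersetCard k Finset.univ
      (fun j => j * (connectedLabelledGraphCount j * 2 ^ (p - j).choose 2)),
      Finset.card_univ, hcard, smul_eq_mul]
  have step5 : (∑ k ∈ Finset.range (p + 1),
          p.choose k * (k * (connectedLabelledGraphCount k * 2 ^ (p - k).choose 2)))
      = ∑ k ∈ Finset.Icc 1 p,
          p.choose k * (k * (connectedLabelledGraphCount k * 2 ^ (p - k).choose 2)) := by
    refine (Finset.sum_subset (fun k hk => ?_) (fun k hk hk' => ?_)).symm
    · rw [Finset.mem_Icc] at hk
      exact Finset.mem_range.mpr (Nat.lt_succ_of_le hk.2)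
    · have : k = 0 := by
        rw [Finset.mem_range] at hk
        rw [Finset.mem_Icc] at hk'
        omega
      subst this
      simp
  rw [step1, step2, step3, step4, step5]
  refine Finset.sum_congr rfl fun k _ => ?_
  ring
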